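/- Let d ≥ 1, K ≥ 0, and let φ : ℝ^d → ℝ be K-Lipschitz. Fix t > 0 and set ψ_t(y) = ‖y‖²/2 + t·φ(y), ψ_t*(x) = sup_y (⟨x,y⟩ − ψ_t(y)), ψ_t**(y) = sup_x (⟨x,y⟩ − ψ_t*(x)), and Θ_t = {y ∈ ℝ^d : ψ_t**(y) = ψ_t(y)}. Then for every x ∈ ℝ^d, every point y ∈ ∂ψ_t*(x) belongs to the convex hull of the set ∂ψ_t*(x) ∩ Θ_t. -/

import Mathlib

open scoped RealInnerProductSpace
noncomputable section

/-- Legendre transform: `f*(x) = sup_y (⟨x,y⟩ − f(y))`. -/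
def conj {d : ℕ} (f : EuclideanSpace ℝ (Fin d) → ℝ)
    (x : EuclideanSpace ℝ (Fin d)) : ℝ :=
  ⨆ y : EuclideanSpace ℝ (Fin d), (⟪x, y⟫ - f y)

/-- `ψ_t(y) = ‖y‖²/2 + t φ(y)`. -/
def psiFun {d : ℕ} (φ : EuclideanSpace ℝ (Fin d) → ℝ) (t : ℝ)
    (y : EuclideanSpace ℝ (Fin d)) : ℝ :=
  ‖y‖ ^ 2 / 2 + t * φ y

/-- The subgradient of `g` at `x`. -/
def subgrad {d : ℕ} (g : EuclideanSpace ℝ (Fin d) → ℝ)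
    (x : EuclideanSpace ℝ (Fin d)) : Set (EuclideanSpace ℝ (Fin d)) :=
  {y | ∀ z, g z ≥ g x + ⟪y, z - x⟫}

open Filter Topology Set

/-- Padding helper: a sum over `Fin D` of a function vanishing above `n` equals
the sum over `Fin n`. -/
lemma stmt13_sum_pad {M : Type*} [AddCommMonoid M] {D n : ℕ} (hn : n ≤ D) (F : ℕ → M)
    (hF : ∀ i, n ≤ i → F i = 0) : ∑ i : Fin D, F i = ∑ j : Fin n, F j := by
  rw [Fin.sum_univ_eq_sum_range, Fin.sum_univ_eq_sum_range]
  exact (Finset.sum_subset (Finset.range_subset_range.2 hn)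
    (fun i _ hi => hF i (by simpa using hi))).symm

/-- The convex hull of a compact subset of a Euclidean space is compact. -/
lemma stmt13_isCompact_convexHull {d : ℕ} {s : Set (EuclideanSpace ℝ (Fin d))}
    (hs : IsCompact s) : IsCompact (convexHull ℝ s) := by
  classical
  rcases s.eq_empty_or_nonempty with rfl | ⟨s0, hs0⟩
  · simp only [convexHull_empty]; exact isCompact_empty
  set D := d + 1 with hD
  set T : (Fin D → ℝ) × (Fin D → EuclideanSpace ℝ (Fin d)) → EuclideanSpace ℝ (Fin d) :=
    fun p => ∑ i, p.1 i • p.2 i with hT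
  have hTc : Continuous T := by
    apply continuous_finset_sum
    intro i _
    exact ((continuous_apply i).comp continuous_fst).smul
      ((continuous_apply i).comp continuous_snd)
  have hKc : IsCompact ((stdSimplex ℝ (Fin D)) ×ˢ (Set.pi Set.univ fun _ : Fin D => s)) :=
    IsCompact.prod (isCompact_stdSimplex (𝕜 := ℝ) (ι := Fin D)) (isCompact_univ_pi fun _ => hs)
  have himg : T '' ((stdSimplex ℝ (Fin D)) ×ˢ (Set.pi Set.univ fun _ : Fin D => s))
      = convexHull ℝ s := by
    apply Set.Subset.antisymm
    · rintro _ ⟨⟨w, z⟩, ⟨hw, hz⟩, rfl⟩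
      exact (convex_convexHull ℝ s).sum_mem (fun i _ => hw.1 i) hw.2
        (fun i _ => subset_convexHull ℝ s (hz i (Set.mem_univ i)))
    · intro q hq
      obtain ⟨ι, hfin, z, w, hzs, hai, hwpos, hwsum, hzsum⟩ :=
        eq_pos_convex_span_of_mem_convexHull hq
      letI := hfin
      set n := Fintype.card ι with hn
      have hnD : n ≤ D := by
        have h1 := hai.card_le_finrank_succ
        have h2 : Module.finrank ℝ (vectorSpan ℝ (Set.range z)) ≤ d := by
          have h3 := Submodule.finrank_le (vectorSpan ℝ (Set.range z))
          simpa [finrank_euclideanSpace_fin] using h3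
        omega
      set e := Fintype.equivFin ι with he
      set w'' : ℕ → ℝ := fun i => if h : i < n then w (e.symm ⟨i, h⟩) else 0 with hw''
      set z'' : ℕ → EuclideanSpace ℝ (Fin d) :=
        fun i => if h : i < n then z (e.symm ⟨i, h⟩) else s0 with hz''
      refine ⟨(fun i : Fin D => w'' i, fun i : Fin D => z'' i), ⟨⟨fun i => ?_, ?_⟩, fun i _ => ?_⟩, ?_⟩
      · simp only [hw'']
        split_ifs with h
        · exact (hwpos _).le
        · exact le_rfl
      · have hpad := stmt13_sum_pad hnD w'' (fun i hi => by simp [hw'', Nat.not_lt.2 hi])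
        rw [hpad]
        have : ∀ j : Fin n, w'' j = w (e.symm j) := by
          intro j
          simp only [hw'', dif_pos j.isLt, Fin.eta]
        rw [Finset.sum_congr rfl (fun j _ => this j)]
        rw [Equiv.sum_comp e.symm w]
        exact hwsum
      · simp only [hz'']
        split_ifs with h
        · exact hzs (Set.mem_range_self _)
        · exact hs0
      · simp only [hT]
        have hpad := stmt13_sum_pad hnD (fun i => w'' i • z'' i)
          (fun i hi => by simp [hw'', Nat.not_lt.2 hi])
        rw [hpad]
        have : ∀ j : Fin n, w'' j • z'' j = w (e.symm j) • z (e.symm j) := by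
          intro j
          simp only [hw'', hz'', dif_pos j.isLt, Fin.eta]
        rw [Finset.sum_congr rfl (fun j _ => this j)]
        rw [Equiv.sum_comp e.symm (fun i => w i • z i)]
        exact hzsum
  rw [← himg]
  exact hKc.image hTc

theorem stmt13 (d : ℕ) (hd : 1 ≤ d) (K : ℝ) (hK : 0 ≤ K)
    (φ : EuclideanSpace ℝ (Fin d) → ℝ)
    (hLip : ∀ y z, |φ y - φ z| ≤ K * ‖y - z‖)
    (t : ℝ) (ht : 0 < t) (x : EuclideanSpace ℝ (Fin d)) :
    ∀ y ∈ subgrad (conj (psiFun φ t)) x,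
      y ∈ convexHull ℝ (subgrad (conj (psiFun φ t)) x ∩
        {y' | conj (conj (psiFun φ t)) y' = psiFun φ t y'}) := by
  classical
  intro y0 hy0
  set f : EuclideanSpace ℝ (Fin d) → ℝ := psiFun φ t with hf
  have hy0' : ∀ z, conj f z ≥ conj f x + ⟪y0, z - x⟫ := hy0
  -- φ is continuous
  have hφc : Continuous φ := by
    have h : LipschitzWith K.toNNReal φ := LipschitzWith.of_dist_le_mul (by
      intro a b
      rw [Real.dist_eq, dist_eq_norm, Real.coe_toNNReal K hK]
      exact hLip a b)
    exact h.continuous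
  have hFc : ∀ x' : EuclideanSpace ℝ (Fin d),
      Continuous (fun y' : EuclideanSpace ℝ (Fin d) => ⟪x', y'⟫ - f y') := by
    intro x'
    have hfc : Continuous f := by
      simp only [hf, psiFun]
      exact ((continuous_norm.pow 2).div_const 2).add (continuous_const.mul hφc)
    exact (continuous_const.inner continuous_id).sub hfc
  -- lower bound on φ
  have hφlb : ∀ y' : EuclideanSpace ℝ (Fin d), φ 0 - K * ‖y'‖ ≤ φ y' := by
    intro y'
    have h := hLip y' 0
    rw [sub_zero] at h
    have h2 := neg_abs_le (φ y' - φ 0)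
    linarith
  -- bound for far-away points
  have hout : ∀ (x' y' : EuclideanSpace ℝ (Fin d)), 2 * (‖x'‖ + t * K) + 1 ≤ ‖y'‖ →
      ⟪x', y'⟫ - f y' ≤ (⟪x', (0 : EuclideanSpace ℝ (Fin d))⟫ - f 0) - 2⁻¹ := by
    intro x' y' hy'
    have h1 : ⟪x', y'⟫ ≤ ‖x'‖ * ‖y'‖ := real_inner_le_norm x' y'
    have h2 := mul_le_mul_of_nonneg_left (hφlb y') ht.le
    have h3 : (0:ℝ) ≤ ‖x'‖ := norm_nonneg _
    have h4 : (0:ℝ) ≤ t * K := mul_nonneg ht.le hK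
    have key : 0 ≤ ‖y'‖ * (‖y'‖ / 2 - (‖x'‖ + t * K) - 2⁻¹) :=
      mul_nonneg (norm_nonneg _) (by linarith)
    simp only [hf, psiFun, inner_zero_right, norm_zero]
    nlinarith [norm_nonneg y']
  -- existence of maximizers
  have hmaxex : ∀ x' : EuclideanSpace ℝ (Fin d), ∃ y',
      (∀ z, ⟪x', z⟫ - f z ≤ ⟪x', y'⟫ - f y') ∧ ‖y'‖ ≤ 2 * (‖x'‖ + t * K) + 1 := by
    intro x'
    set R := 2 * (‖x'‖ + t * K) + 1 with hRdef
    have hR0 : (0:ℝ) ≤ R := by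
      have h3 : (0:ℝ) ≤ ‖x'‖ := norm_nonneg _
      have h4 : (0:ℝ) ≤ t * K := mul_nonneg ht.le hK
      simp only [hRdef]; linarith
    obtain ⟨y', hy'B, hy'max⟩ := (isCompact_closedBall (0 : EuclideanSpace ℝ (Fin d)) R).exists_isMaxOn
      ⟨0, Metric.mem_closedBall_self hR0⟩ (hFc x').continuousOn
    refine ⟨y', fun z => ?_, by simpa [Metric.mem_closedBall, dist_zero_right] using hy'B⟩
    by_cases hz : z ∈ Metric.closedBall (0 : EuclideanSpace ℝ (Fin d)) R
    · exact hy'max hz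
    · have hz' : R ≤ ‖z‖ := by
        simp only [Metric.mem_closedBall, dist_zero_right, not_le] at hz
        exact hz.le
      have h5 := hout x' z hz'
      have h6 := hy'max (Metric.mem_closedBall_self hR0)
      simp only [Set.mem_setOf_eq] at h6
      linarith [h6]
  have hbdd : ∀ x' : EuclideanSpace ℝ (Fin d),
      BddAbove (Set.range fun y' => ⟪x', y'⟫ - f y') := by
    intro x'
    obtain ⟨y', hy', _⟩ := hmaxex x'
    exact ⟨⟪x', y'⟫ - f y', Set.forall_mem_range.2 hy'⟩
  have hle : ∀ (x' y' : EuclideanSpace ℝ (Fin d)), ⟪x', y'⟫ - f y' ≤ conj f x' :=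
    fun x' y' => le_ciSup (hbdd x') y'
  have hconj : ∀ x' : EuclideanSpace ℝ (Fin d), ∃ y',
      conj f x' = ⟪x', y'⟫ - f y' ∧ ‖y'‖ ≤ 2 * (‖x'‖ + t * K) + 1 := by
    intro x'
    obtain ⟨y', hy', hnorm⟩ := hmaxex x'
    exact ⟨y', le_antisymm (ciSup_le hy') (hle x' y'), hnorm⟩
  -- the set of maximizers at x
  set Y : Set (EuclideanSpace ℝ (Fin d)) := {y' | ⟪x, y'⟫ - f y' = conj f x} with hYdef
  have hYsub : Y ⊆ subgrad (conj f) x ∩ {y' | conj (conj f) y' = f y'} := by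
    rintro y' hy'
    have hy'' : ⟪x, y'⟫ - f y' = conj f x := hy'
    constructor
    · intro z
      have h1 := hle z y'
      have h2 : ⟪y', z - x⟫ = ⟪z, y'⟫ - ⟪x, y'⟫ := by
        rw [inner_sub_right, real_inner_comm z y', real_inner_comm x y']
      rw [ge_iff_le, h2]
      linarith
    · have hub : ∀ x' : EuclideanSpace ℝ (Fin d), ⟪y', x'⟫ - conj f x' ≤ f y' := by
        intro x'
        have h1 := hle x' y'
        rw [real_inner_comm x' y']
        linarith
      have h1 : conj (conj f) y' ≤ f y' := ciSup_le hub
      have h2 : f y' ≤ conj (conj f) y' := by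
        have h3 : ⟪y', x⟫ - conj f x = f y' := by
          rw [real_inner_comm x y']; linarith
        calc f y' = ⟪y', x⟫ - conj f x := h3.symm
        _ ≤ conj (conj f) y' := le_ciSup ⟨f y', Set.forall_mem_range.2 hub⟩ x
      exact le_antisymm h1 h2
  -- Y is compact
  have hYbd : Y ⊆ Metric.closedBall (0 : EuclideanSpace ℝ (Fin d)) (2 * (‖x‖ + t * K) + 1) := by
    intro y' hy'
    have hy'' : ⟪x, y'⟫ - f y' = conj f x := hy'
    simp only [Metric.mem_closedBall, dist_zero_right]
    by_contra hbig
    push_neg at hbig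
    have h1 := hout x y' hbig.le
    have h2 := hle x 0
    linarith
  have hYclosed : IsClosed Y := isClosed_eq (hFc x) continuous_const
  have hYcomp : IsCompact Y :=
    (isCompact_closedBall _ _).of_isClosed_subset hYclosed hYbd
  -- suffices to show membership in conv Y
  suffices hmem : y0 ∈ convexHull ℝ Y by
    exact convexHull_mono hYsub hmem
  by_contra hnot
  have hconvcomp : IsCompact (convexHull ℝ Y) := stmt13_isCompact_convexHull hYcomp
  obtain ⟨L, u, hLu, huy0⟩ := geometric_hahn_banach_closed_point
    (convex_convexHull ℝ Y) hconvcomp.isClosed hnot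
  set v : EuclideanSpace ℝ (Fin d) :=
    (InnerProductSpace.toDual ℝ (EuclideanSpace ℝ (Fin d))).symm L with hvdef
  have hvL : ∀ z : EuclideanSpace ℝ (Fin d), ⟪v, z⟫ = L z :=
    fun z => InnerProductSpace.toDual_symm_apply
  -- the sequence of maximizers at x + σ n • v
  set σ : ℕ → ℝ := fun n => 1 / ((n : ℝ) + 1) with hσdef
  have hσpos : ∀ n, 0 < σ n := fun n => by positivity
  have hσle1 : ∀ n, σ n ≤ 1 := by
    intro n
    rw [hσdef]
    rw [div_le_one (by positivity)]
    have : (0:ℝ) ≤ (n:ℝ) := Nat.cast_nonneg n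
    linarith
  choose ys hys hysn using fun n => hconj (x + σ n • v)
  set R' : ℝ := 2 * (‖x‖ + ‖v‖ + t * K) + 1 with hR'def
  have hR' : ∀ n, ‖ys n‖ ≤ R' := by
    intro n
    have h1 : ‖x + σ n • v‖ ≤ ‖x‖ + ‖v‖ := by
      have h2 : ‖σ n • v‖ = σ n * ‖v‖ := by
        rw [norm_smul, Real.norm_eq_abs, abs_of_pos (hσpos n)]
      have h3 := norm_add_le x (σ n • v)
      have h4 : σ n * ‖v‖ ≤ 1 * ‖v‖ :=
        mul_le_mul_of_nonneg_right (hσle1 n) (norm_nonneg v)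
      rw [h2] at h3
      linarith
    have h5 := hysn n
    simp only [hR'def]
    linarith
  -- identities for the sequence
  have hid : ∀ n, conj f (x + σ n • v) = ⟪x, ys n⟫ + σ n * ⟪v, ys n⟫ - f (ys n) := by
    intro n
    rw [hys n, inner_add_left, real_inner_smul_left]
  have hsub : ∀ n, conj f x + σ n * ⟪v, y0⟫ ≤ conj f (x + σ n • v) := by
    intro n
    have h1 := hy0' (x + σ n • v)
    rw [add_sub_cancel_left, real_inner_smul_right, real_inner_comm v y0] at h1
    linarith [h1]
  -- key inequality
  have hkey : ∀ n, ⟪v, y0⟫ ≤ ⟪v, ys n⟫ := by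
    intro n
    have h1 := hsub n
    rw [hid n] at h1
    have h2 := hle x (ys n)
    have h3 : σ n * ⟪v, y0⟫ ≤ σ n * ⟪v, ys n⟫ := by linarith
    exact (mul_le_mul_iff_right₀ (hσpos n)).mp h3
  -- lower bound on the value at x
  set C : ℝ := |⟪v, y0⟫| + ‖v‖ * R' with hCdef
  have hlow : ∀ n, conj f x - σ n * C ≤ ⟪x, ys n⟫ - f (ys n) := by
    intro n
    have h1 := hsub n
    rw [hid n] at h1
    have hb : ⟪v, ys n⟫ ≤ ‖v‖ * R' := by
      have hb1 := abs_real_inner_le_norm v (ys n)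
      have hb2 := mul_le_mul_of_nonneg_left (hR' n) (norm_nonneg v)
      have hb3 := le_abs_self (⟪v, ys n⟫)
      linarith
    have e1 : σ n * ⟪v, ys n⟫ ≤ σ n * (‖v‖ * R') :=
      mul_le_mul_of_nonneg_left hb (hσpos n).le
    have e2 : σ n * (-|⟪v, y0⟫|) ≤ σ n * ⟪v, y0⟫ :=
      mul_le_mul_of_nonneg_left (neg_abs_le _) (hσpos n).le
    simp only [hCdef]
    nlinarith [e1, e2, h1]
  -- extract a convergent subsequence
  have hballmem : ∀ n, ys n ∈ Metric.closedBall (0 : EuclideanSpace ℝ (Fin d)) R' := by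
    intro n
    simpa [Metric.mem_closedBall, dist_zero_right] using hR' n
  obtain ⟨yb, hybB, nk, hnk, hconv⟩ :=
    (isCompact_closedBall (0 : EuclideanSpace ℝ (Fin d)) R').tendsto_subseq hballmem
  have hσ0 : Tendsto σ atTop (𝓝 0) := by
    simpa only [hσdef] using tendsto_one_div_add_atTop_nhds_zero_nat
  have hσnk : Tendsto (fun k => σ (nk k)) atTop (𝓝 0) := hσ0.comp hnk.tendsto_atTop
  have h5 : Tendsto (fun k => ⟪x, ys (nk k)⟫ - f (ys (nk k))) atTop
      (𝓝 (⟪x, yb⟫ - f yb)) := ((hFc x).tendsto yb).comp hconv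
  have h6 : Tendsto (fun k => conj f x - σ (nk k) * C) atTop (𝓝 (conj f x)) := by
    have h7 : Tendsto (fun _ : ℕ => conj f x) atTop (𝓝 (conj f x)) := tendsto_const_nhds
    have h8 := h7.sub (hσnk.mul_const C)
    simpa using h8
  have h9 : conj f x ≤ ⟪x, yb⟫ - f yb :=
    le_of_tendsto_of_tendsto' h6 h5 (fun k => hlow (nk k))
  have hybY : yb ∈ Y := le_antisymm (hle x yb) h9
  have h10 : Tendsto (fun k => ⟪v, ys (nk k)⟫) atTop (𝓝 (⟪v, yb⟫)) :=
    ((continuous_const.inner continuous_id).tendsto yb).comp hconv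
  have h11 : ⟪v, y0⟫ ≤ ⟪v, yb⟫ :=
    le_of_tendsto_of_tendsto' tendsto_const_nhds h10 (fun k => hkey (nk k))
  have h12 : L yb < u := hLu yb (subset_convexHull ℝ Y hybY)
  rw [← hvL yb] at h12
  rw [← hvL y0] at huy0
  linarith
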